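/- Let Σ̂ ∈ ℝ^{m×m} be symmetric with Σ̂_{vv} ≥ 0, let Γ ∈ ℝ^{m×m}, let λ ≥ 0, and let u ≠ v be indices with Γ_{uv} = 0 and Γ_{vu} = 0. Suppose: (a) for every pair a ≠ b with Γ_{ab} ≠ 0, (Σ̂ Γ)_{ab} = 0; and (b) |(Σ̂ Γ)_{vu}| ≤ λ·√(Σ̂_{vv}), and for every index i ∉ {u,v} with Γ_{ui} ≠ 0 and Γ_{vi} = 0, |(Σ̂ Γ)_{vi}| ≤ λ·√(Σ̂_{vv}). Then (Γ Γᵀ Σ̂)_{uv} = Γ_{uu}·(Σ̂ Γ)_{vu} + Σ_{i ∈ F} Γ_{ui} (Σ̂ Γ)_{vi}, where F := {i : i ∉ {u,v}, Γ_{ui} ≠ 0, Γ_{vi} = 0}, and consequently |(Γ Γᵀ Σ̂)_{uv}| ≤ λ·√(Σ̂_{vv})·(|Γ_{uu}| + Σ_{i ∈ F} |Γ_{ui}|). -/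
import Mathlib


open Matrix in
/-- Algebraic core of 'Settings II.1 and II.2' in the proof of Theorem 2:
under the stationarity condition (a) and the thresholding bounds (b), for
`u ≠ v` with `Γᵤᵥ = Γᵥᵤ = 0`, the entry `(Γ Γᵀ Σ̂)ᵤᵥ` equals
`Γᵤᵤ (Σ̂ Γ)ᵥᵤ + ∑_{i ∈ F} Γᵤᵢ (Σ̂ Γ)ᵥᵢ` with
`F = {i ∉ {u,v} : Γᵤᵢ ≠ 0, Γᵥᵢ = 0}`, and is bounded in absolute value by
`λ √(Σ̂ᵥᵥ) (|Γᵤᵤ| + ∑_{i ∈ F} |Γᵤᵢ|)`. -/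
theorem stmt_14 {m : ℕ} (Sig Γ : Matrix (Fin m) (Fin m) ℝ) (u v : Fin m)
    (hsymm : Sig.IsSymm) (hvv : 0 ≤ Sig v v) (lam : ℝ) (hlam : 0 ≤ lam)
    (huv : u ≠ v) (hΓuv : Γ u v = 0) (hΓvu : Γ v u = 0)
    (ha : ∀ a b : Fin m, a ≠ b → Γ a b ≠ 0 → (Sig * Γ) a b = 0)
    (hb1 : |(Sig * Γ) v u| ≤ lam * Real.sqrt (Sig v v))
    (hb2 : ∀ i : Fin m, i ≠ u → i ≠ v → Γ u i ≠ 0 → Γ v i = 0 →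
      |(Sig * Γ) v i| ≤ lam * Real.sqrt (Sig v v)) :
    ((Γ * Γᵀ * Sig) u v =
      Γ u u * (Sig * Γ) v u +
        ∑ i ∈ Finset.univ.filter (fun i => i ≠ u ∧ i ≠ v ∧ Γ u i ≠ 0 ∧ Γ v i = 0),
          Γ u i * (Sig * Γ) v i) ∧
    |(Γ * Γᵀ * Sig) u v| ≤
      lam * Real.sqrt (Sig v v) *
        (|Γ u u| +
          ∑ i ∈ Finset.univ.filter (fun i => i ≠ u ∧ i ≠ v ∧ Γ u i ≠ 0 ∧ Γ v i = 0),
            |Γ u i|) := by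

  set F := Finset.univ.filter (fun i => i ≠ u ∧ i ≠ v ∧ Γ u i ≠ 0 ∧ Γ v i = 0) with hF
  have hs : ∀ j, Sig j v = Sig v j := fun j => hsymm.apply v j
  have key : (Γ * Γᵀ * Sig) u v = ∑ i, Γ u i * (Sig * Γ) v i := by
    simp only [Matrix.mul_apply, Matrix.transpose_apply, Finset.sum_mul, Finset.mul_sum]
    rw [Finset.sum_comm]
    refine Finset.sum_congr rfl fun i _ => Finset.sum_congr rfl fun j _ => ?_
    rw [hs j]; ring
  have hzero : ∀ i, i ≠ u → i ∉ F → Γ u i * (Sig * Γ) v i = 0 := by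
    intro i hiu hiF
    by_cases hΓui : Γ u i = 0
    · simp [hΓui]
    by_cases hiv : i = v
    · subst hiv; exact absurd hΓuv hΓui
    by_cases hΓvi : Γ v i = 0
    · exact absurd (by simp [hF, hiu, hiv, hΓui, hΓvi]) hiF
    · rw [ha v i (Ne.symm hiv) hΓvi]; ring
  have huF : u ∉ F := by simp [hF]
  have heq : (Γ * Γᵀ * Sig) u v =
      Γ u u * (Sig * Γ) v u + ∑ i ∈ F, Γ u i * (Sig * Γ) v i := by
    rw [key, ← Finset.sum_insert (f := fun i => Γ u i * (Sig * Γ) v i) huF]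
    refine (Finset.sum_subset (Finset.subset_univ _) ?_).symm
    intro i _ hi
    rw [Finset.mem_insert] at hi
    push_neg at hi
    exact hzero i hi.1 hi.2
  refine ⟨heq, ?_⟩
  rw [heq]
  have hL : 0 ≤ lam * Real.sqrt (Sig v v) := mul_nonneg hlam (Real.sqrt_nonneg _)
  calc |Γ u u * (Sig * Γ) v u + ∑ i ∈ F, Γ u i * (Sig * Γ) v i|
      ≤ |Γ u u * (Sig * Γ) v u| + |∑ i ∈ F, Γ u i * (Sig * Γ) v i| := abs_add_le _ _
    _ ≤ |Γ u u| * (lam * Real.sqrt (Sig v v)) +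
          ∑ i ∈ F, |Γ u i| * (lam * Real.sqrt (Sig v v)) := by
        gcongr
        · rw [abs_mul]
          exact mul_le_mul_of_nonneg_left hb1 (abs_nonneg _)
        · refine (Finset.abs_sum_le_sum_abs _ _).trans ?_
          refine Finset.sum_le_sum fun i hi => ?_
          simp only [hF, Finset.mem_filter, Finset.mem_univ, true_and] at hi
          rw [abs_mul]
          exact mul_le_mul_of_nonneg_left (hb2 i hi.1 hi.2.1 hi.2.2.1 hi.2.2.2) (abs_nonneg _)
    _ = lam * Real.sqrt (Sig v v) * (|Γ u u| + ∑ i ∈ F, |Γ u i|) := by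
        rw [← Finset.sum_mul]; ring
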